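/- arXiv:2105.07438 — 3 statements merged into one kernel-verified Lean document; each statement's English description precedes it below -/
import Mathlib

section
/- If α, δ ∈ (0,1) with α + δ < 1 and N_s ≥ 1 satisfy (1 + α/δ)·(1 − α/(1−δ))^(N_s−1) > 1, and r = (r_1,…,r_K) are nonnegative integers with Σ r_i ≤ N_s, then every maximizer m of the function f(m) = (1+α/δ)^{r_m} · (1 − α/(1−δ))^{−Σ_{i=1}^{m} r_i} over m ∈ {1,…,K} satisfies r_m = max_n r_n; moreover the largest maximizer of f equals the largest index n achieving max_n r_n. -/
open Finset

/-- Theorem 1: under the condition `(1+α/δ)(1-α/(1-δ))^(N_s-1) > 1`, every maximizer of the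
ML objective `f` has maximal `r`-value, and the largest maximizer of `f` is the largest
index achieving `max r`. -/
theorem stmt_0 (α δ : ℝ) (hα : α ∈ Set.Ioo (0:ℝ) 1) (hδ : δ ∈ Set.Ioo (0:ℝ) 1)
    (hαδ : α + δ < 1) (Ns K : ℕ) (hNs : 1 ≤ Ns) (hK : 1 ≤ K)
    (hcond : (1 + α / δ) * (1 - α / (1 - δ)) ^ (Ns - 1) > 1)
    (r : Fin K → ℕ) (hr : ∑ i, r i ≤ Ns)
    (f : Fin K → ℝ)
    (hf : ∀ m, f m = (1 + α / δ) ^ (r m) *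
      (1 - α / (1 - δ)) ^ (-(∑ i ∈ Finset.univ.filter (· ≤ m), (r i : ℤ)))) :
    (∀ m, (∀ n, f n ≤ f m) → r m = Finset.univ.sup r) ∧
    (Finset.univ.filter (fun m => ∀ n, f n ≤ f m)).max
      = (Finset.univ.filter (fun m => r m = Finset.univ.sup r)).max := by
  obtain ⟨hα0, hα1⟩ := hα
  obtain ⟨hδ0, hδ1⟩ := hδ
  set a : ℝ := 1 + α / δ with ha_def
  set b : ℝ := 1 - α / (1 - δ) with hb_def
  have hδ1' : 0 < 1 - δ := by linarith
  have ha1 : 1 < a := by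
    have : 0 < α / δ := div_pos hα0 hδ0
    simp [ha_def]; linarith
  have hb0 : 0 < b := by
    have h1 : α / (1 - δ) < 1 := (div_lt_one hδ1').mpr (by linarith)
    simp [hb_def]; linarith
  have hb1 : b < 1 := by
    have : 0 < α / (1 - δ) := div_pos hα0 hδ1'
    simp [hb_def]; linarith
  have ha0 : 0 < a := by linarith
  -- partial sums
  set S : Fin K → ℤ := fun m => ∑ i ∈ Finset.univ.filter (· ≤ m), (r i : ℤ) with hS_def
  have hfS : ∀ m, f m = a ^ (r m) * b ^ (-(S m)) := hf
  have hfpos : ∀ m, 0 < f m := by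
    intro m
    rw [hfS m]
    positivity
  have hSmono : ∀ m n : Fin K, m ≤ n → S m ≤ S n := by
    intro m n hmn
    apply Finset.sum_le_sum_of_subset_of_nonneg
    · intro i hi
      simp only [Finset.mem_filter, Finset.mem_univ, true_and] at hi ⊢
      exact hi.trans hmn
    · intros; positivity
  -- Lemma 1: monotone comparison for m ≤ n with r m ≤ r n
  have L1 : ∀ m n : Fin K, m ≤ n → r m ≤ r n → f m ≤ f n := by
    intro m n hmn hrmn
    rw [hfS m, hfS n]
    apply mul_le_mul
    · exact pow_le_pow_right₀ ha1.le hrmn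
    · exact zpow_le_zpow_right_of_le_one₀ hb0 hb1.le (by linarith [hSmono m n hmn])
    · positivity
    · positivity
  -- Lemma 2: strictly larger r gives strictly larger f
  have L2 : ∀ m n : Fin K, r m < r n → f m < f n := by
    intro m n hrmn
    rcases lt_trichotomy m n with hmn | hmn | hmn
    · -- easy case m < n
      rw [hfS m, hfS n]
      apply mul_lt_mul
      · exact pow_lt_pow_right₀ ha1 hrmn
      · exact zpow_le_zpow_right_of_le_one₀ hb0 hb1.le (by linarith [hSmono m n hmn.le])
      · positivity
      · positivity
    · subst hmn; omega
    · -- hard case n < m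
      obtain ⟨d, hd⟩ := Nat.exists_eq_add_of_lt hrmn
      set e := d + 1 with he_def
      have hrn : r n = r m + e := by omega
      -- the sum over indices in (n, m]
      have hsub : Finset.univ.filter (· ≤ n) ⊆ Finset.univ.filter (· ≤ m) := by
        intro i hi
        simp only [Finset.mem_filter, Finset.mem_univ, true_and] at hi ⊢
        exact hi.trans hmn.le
      set D := Finset.univ.filter (· ≤ m) \ Finset.univ.filter (· ≤ n) with hD_def
      set t : ℕ := ∑ i ∈ D, r i with ht_def
      have hSt : S m = S n + (t : ℤ) := by
        have := Finset.sum_sdiff (f := fun i => (r i : ℤ)) hsub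
        rw [hS_def]
        push_cast [ht_def]
        rw [hD_def]
        linarith [this]
      have hnD : n ∉ D := by
        simp [hD_def, le_refl]
      have hins : insert n D ⊆ Finset.univ := by simp
      have htNs : r n + t ≤ Ns := by
        have h1 : ∑ i ∈ insert n D, r i ≤ ∑ i, r i :=
          Finset.sum_le_sum_of_subset hins
        rw [Finset.sum_insert hnD] at h1
        omega
      -- t ≤ e * (Ns - 1)
      have hte : t ≤ e * (Ns - 1) := by
        have h2 : e ≤ r n := by omega
        have h3 : e * (Ns - 1) + e = e * Ns := by
          have : (Ns - 1) + 1 = Ns := by omega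
          calc e * (Ns - 1) + e = e * ((Ns - 1) + 1) := by ring
            _ = e * Ns := by rw [this]
        have h4 : Ns ≤ e * Ns := Nat.le_mul_of_pos_left Ns (by omega)
        have h5 : t + e ≤ Ns := by omega
        omega
      -- key: 1 < a ^ e * b ^ t
      have hkey : 1 < a ^ e * b ^ t := by
        have h6 : b ^ t ≥ b ^ (e * (Ns - 1)) := pow_le_pow_of_le_one hb0.le hb1.le hte
        have h7 : (1:ℝ) < (a * b ^ (Ns - 1)) ^ e := one_lt_pow₀ hcond (by omega)
        have h8 : (a * b ^ (Ns - 1)) ^ e = a ^ e * b ^ (e * (Ns - 1)) := by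
          rw [mul_pow, ← pow_mul, Nat.mul_comm]
        calc (1:ℝ) < a ^ e * b ^ (e * (Ns - 1)) := by rw [← h8]; exact h7
          _ ≤ a ^ e * b ^ t := by
              apply mul_le_mul_of_nonneg_left h6 (by positivity)
      -- conclude
      rw [hfS m, hfS n, hSt]
      have hbt : (0:ℝ) < b ^ t := by positivity
      have hbSn : (0:ℝ) < b ^ (-(S n)) := by positivity
      have hsplit : b ^ (-(S n + (t:ℤ))) = b ^ (-(S n)) * (b ^ t)⁻¹ := by
        rw [neg_add, zpow_add₀ (ne_of_gt hb0)]
        congr 1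
        rw [zpow_neg, zpow_natCast]
      rw [hsplit, hrn]
      have hmain : (a:ℝ) ^ (r m) < a ^ (r m + e) * b ^ t := by
        rw [pow_add]
        calc (a:ℝ) ^ (r m) = a ^ (r m) * 1 := by ring
          _ < a ^ (r m) * (a ^ e * b ^ t) := by
              apply mul_lt_mul_of_pos_left hkey (by positivity)
          _ = a ^ (r m) * a ^ e * b ^ t := by ring
      calc a ^ (r m) * (b ^ (-(S n)) * (b ^ t)⁻¹)
          = (a ^ (r m) * (b ^ t)⁻¹) * b ^ (-(S n)) := by ring
        _ < a ^ (r m + e) * b ^ (-(S n)) := by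
            apply mul_lt_mul_of_pos_right _ hbSn
            rw [← div_eq_mul_inv, div_lt_iff₀ hbt]
            exact hmain
  -- Part 1
  have part1 : ∀ m : Fin K, (∀ n, f n ≤ f m) → r m = Finset.univ.sup r := by
    intro m hm
    have hKne : (Finset.univ : Finset (Fin K)).Nonempty := by
      exact Finset.univ_nonempty_iff.mpr (Fin.pos_iff_nonempty.mp (by omega))
    obtain ⟨n, _, hn⟩ := Finset.exists_mem_eq_sup Finset.univ hKne r
    have hle : r m ≤ Finset.univ.sup r := Finset.le_sup (Finset.mem_univ m)
    by_contra hne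
    have hlt : r m < r n := by omega
    exact absurd (hm n) (not_le.mpr (L2 m n hlt))
  refine ⟨part1, ?_⟩
  -- Part 2
  have hKne : (Finset.univ : Finset (Fin K)).Nonempty :=
    Finset.univ_nonempty_iff.mpr (Fin.pos_iff_nonempty.mp (by omega))
  set A := Finset.univ.filter (fun m => ∀ n, f n ≤ f m) with hA_def
  set B := Finset.univ.filter (fun m => r m = Finset.univ.sup r) with hB_def
  have hAne : A.Nonempty := by
    obtain ⟨m, _, hm⟩ := Finset.exists_max_image Finset.univ f hKne
    exact ⟨m, by simp [hA_def]; exact fun n => hm n (Finset.mem_univ n)⟩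
  have hBne : B.Nonempty := by
    obtain ⟨n, _, hn⟩ := Finset.exists_mem_eq_sup Finset.univ hKne r
    exact ⟨n, by simp [hB_def, hn.symm]⟩
  have hmax : A.max' hAne = B.max' hBne := by
    have haA : A.max' hAne ∈ A := Finset.max'_mem _ _
    have hbB : B.max' hBne ∈ B := Finset.max'_mem _ _
    have haA' : ∀ n, f n ≤ f (A.max' hAne) := by
      simpa [hA_def] using haA
    have hbB' : r (B.max' hBne) = Finset.univ.sup r := by
      simpa [hB_def] using hbB
    have hra : r (A.max' hAne) = Finset.univ.sup r := part1 _ haA'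
    have hab : A.max' hAne ≤ B.max' hBne := by
      apply Finset.le_max'
      simp [hB_def, hra]
    have hfab : f (A.max' hAne) ≤ f (B.max' hBne) :=
      L1 _ _ hab (by rw [hra, hbB'])
    have hbA : B.max' hBne ∈ A := by
      simp only [hA_def, Finset.mem_filter, Finset.mem_univ, true_and]
      intro n
      exact (haA' n).trans hfab
    have hba : B.max' hBne ≤ A.max' hAne := Finset.le_max' _ _ hbA
    omega
  have h1 : A.max = (A.max' hAne : Fin K) := (Finset.coe_max' hAne).symm
  have h2 : B.max = (B.max' hBne : Fin K) := (Finset.coe_max' hBne).symm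
  rw [h1, h2, hmax]
end

section
/- Let f : ℝ → ℝ be defined by f(γ) = c₁·φ((γ − m₁)/σ₁)/σ₁ − c₂·φ((γ − m₂)/σ₂)/σ₂ where φ is the standard normal density, m_j = r·μ_j + λ, σ_j = √(r·μ_j + λ) for j = 1,2 with r > 0, λ > 0, μ₂ > μ₁ > 0 and c₁ = c₂ = 1. Then γ* = √((r μ₁ + λ)(r μ₂ + λ)·(ln((r μ₂ + λ)/(r μ₁ + λ))/(r(μ₂ − μ₁)) + 1)) satisfies φ((γ* − m₁)/σ₁)/σ₁ = φ((γ* − m₂)/σ₂)/σ₂, i.e., the two Gaussian densities N(m₁, σ₁²) and N(m₂, σ₂²) are equal at γ*. -/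
/-- The closed-form optimal threshold `γ*` is the crossing point of the two Gaussian
densities `N(m₁, m₁)` and `N(m₂, m₂)` with `mⱼ = r μⱼ + λ`. -/
theorem stmt_5 (r lam μ₁ μ₂ : ℝ) (hr : 0 < r) (hlam : 0 < lam)
    (hμ₁ : 0 < μ₁) (hμ : μ₁ < μ₂)
    (φ : ℝ → ℝ) (hφ : ∀ x, φ x = (Real.sqrt (2 * Real.pi))⁻¹ * Real.exp (-x ^ 2 / 2))
    (m₁ m₂ γ : ℝ) (hm₁ : m₁ = r * μ₁ + lam) (hm₂ : m₂ = r * μ₂ + lam)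
    (hγ : γ = Real.sqrt (m₁ * m₂ * (Real.log (m₂ / m₁) / (r * (μ₂ - μ₁)) + 1))) :
    φ ((γ - m₁) / Real.sqrt m₁) / Real.sqrt m₁
      = φ ((γ - m₂) / Real.sqrt m₂) / Real.sqrt m₂ := by
  have hm₁pos : 0 < m₁ := by rw [hm₁]; positivity
  have hm₂pos : 0 < m₂ := by rw [hm₂]; nlinarith
  have hlt : m₁ < m₂ := by rw [hm₁, hm₂]; nlinarith
  have hd : m₂ - m₁ = r * (μ₂ - μ₁) := by rw [hm₁, hm₂]; ring
  have hLpos : 0 ≤ Real.log (m₂ / m₁) := by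
    apply Real.log_nonneg
    rw [le_div_iff₀ hm₁pos]; linarith
  have hrd : 0 < r * (μ₂ - μ₁) := by nlinarith
  have hinner : 0 ≤ m₁ * m₂ * (Real.log (m₂ / m₁) / (r * (μ₂ - μ₁)) + 1) := by
    have : 0 ≤ Real.log (m₂ / m₁) / (r * (μ₂ - μ₁)) := div_nonneg hLpos hrd.le
    positivity
  have hγ2 : γ ^ 2 = m₁ * m₂ * ((Real.log m₂ - Real.log m₁) / (m₂ - m₁) + 1) := by
    rw [hγ, Real.sq_sqrt hinner, hd, Real.log_div (ne_of_gt hm₂pos) (ne_of_gt hm₁pos)]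
  have hs₁ : Real.sqrt m₁ = Real.exp (Real.log m₁ / 2) := by
    rw [← Real.log_sqrt hm₁pos.le, Real.exp_log (Real.sqrt_pos.mpr hm₁pos)]
  have hs₂ : Real.sqrt m₂ = Real.exp (Real.log m₂ / 2) := by
    rw [← Real.log_sqrt hm₂pos.le, Real.exp_log (Real.sqrt_pos.mpr hm₂pos)]
  have hp₁ : ((γ - m₁) / Real.sqrt m₁) ^ 2 = (γ - m₁) ^ 2 / m₁ := by
    rw [div_pow, Real.sq_sqrt hm₁pos.le]
  have hp₂ : ((γ - m₂) / Real.sqrt m₂) ^ 2 = (γ - m₂) ^ 2 / m₂ := by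
    rw [div_pow, Real.sq_sqrt hm₂pos.le]
  rw [hφ, hφ, hp₁, hp₂, hs₁, hs₂, mul_div_assoc, mul_div_assoc,
    div_eq_mul_inv _ (Real.exp _), div_eq_mul_inv _ (Real.exp _),
    ← Real.exp_neg, ← Real.exp_neg, ← Real.exp_add, ← Real.exp_add]
  congr 1
  have hexp : -((γ - m₁) ^ 2 / m₁) / 2 + -(Real.log m₁ / 2)
      = -((γ - m₂) ^ 2 / m₂) / 2 + -(Real.log m₂ / 2) := by
    have hm₁ne : m₁ ≠ 0 := ne_of_gt hm₁pos
    have hm₂ne : m₂ ≠ 0 := ne_of_gt hm₂pos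
    have hdne : m₂ - m₁ ≠ 0 := by linarith
    field_simp
    field_simp at hγ2
    nlinarith [hγ2, sq_nonneg γ]
  exact congrArg Real.exp hexp
end

section
/- Let Q be the Gaussian tail function. If m₁(M) = c₁·M + λ and m₂(M) = c₂·M + λ with c₂ > c₁ > 0 and λ > 0, and γ*(M) = √(m₁(M) m₂(M) (ln(m₂(M)/m₁(M))/(M(c₂−c₁)) + 1)), then as M → ∞: (γ*(M) − m₁(M))/√(m₁(M)) → +∞ and (γ*(M) − m₂(M))/√(m₂(M)) → −∞; hence Q((γ*(M) − m₁(M))/√m₁(M)) → 0 and Q((γ*(M) − m₂(M))/√m₂(M)) → 1. -/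
open Filter MeasureTheory

private lemma stmt16_exp_eq (t : ℝ) : -t ^ 2 / 2 = -(1/2 : ℝ) * t ^ 2 := by ring

private lemma stmt16_integrable :
    Integrable (fun t : ℝ => (Real.sqrt (2 * Real.pi))⁻¹ * Real.exp (-t ^ 2 / 2)) := by
  have h := (integrable_exp_neg_mul_sq (b := 1/2) (by norm_num)).const_mul
    (Real.sqrt (2 * Real.pi))⁻¹
  simp_rw [stmt16_exp_eq]
  exact h

private lemma stmt16_total :
    (∫ t : ℝ, (Real.sqrt (2 * Real.pi))⁻¹ * Real.exp (-t ^ 2 / 2)) = 1 := by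
  simp_rw [stmt16_exp_eq]
  rw [integral_const_mul, integral_gaussian,
    show (Real.pi / (1/2)) = 2 * Real.pi by ring]
  exact inv_mul_cancel₀ (by positivity)

private lemma stmt16_Q_atTop :
    Tendsto (fun x : ℝ => ∫ t in Set.Ioi x, (Real.sqrt (2 * Real.pi))⁻¹ * Real.exp (-t ^ 2 / 2))
      atTop (nhds 0) := by
  set f : ℝ → ℝ := fun t => (Real.sqrt (2 * Real.pi))⁻¹ * Real.exp (-t ^ 2 / 2) with hf
  have hint : Integrable f := stmt16_integrable
  have key : Tendsto (fun x : ℝ => ∫ t, Set.indicator (Set.Ioi x) f t) atTop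
      (nhds (∫ _ : ℝ, (0 : ℝ))) := by
    apply tendsto_integral_filter_of_dominated_convergence (fun t => ‖f t‖)
    · exact Eventually.of_forall fun x => hint.1.indicator measurableSet_Ioi
    · exact Eventually.of_forall fun x => Eventually.of_forall fun t =>
        norm_indicator_le_norm_self f t
    · exact hint.norm
    · refine Eventually.of_forall fun t => ?_
      apply tendsto_const_nhds.congr'
      filter_upwards [eventually_ge_atTop t] with x hx
      exact (Set.indicator_of_notMem (by simpa using hx) f).symm
  simp only [integral_zero] at key
  exact key.congr fun x => integral_indicator measurableSet_Ioi

private lemma stmt16_Q_atBot :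
    Tendsto (fun x : ℝ => ∫ t in Set.Ioi x, (Real.sqrt (2 * Real.pi))⁻¹ * Real.exp (-t ^ 2 / 2))
      atBot (nhds 1) := by
  set f : ℝ → ℝ := fun t => (Real.sqrt (2 * Real.pi))⁻¹ * Real.exp (-t ^ 2 / 2) with hf
  have hint : Integrable f := stmt16_integrable
  have key : Tendsto (fun x : ℝ => ∫ t, Set.indicator (Set.Ioi x) f t) atBot
      (nhds (∫ t : ℝ, f t)) := by
    apply tendsto_integral_filter_of_dominated_convergence (fun t => ‖f t‖)
    · exact Eventually.of_forall fun x => hint.1.indicator measurableSet_Ioi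
    · exact Eventually.of_forall fun x => Eventually.of_forall fun t =>
        norm_indicator_le_norm_self f t
    · exact hint.norm
    · refine Eventually.of_forall fun t => ?_
      apply tendsto_const_nhds.congr'
      filter_upwards [eventually_lt_atBot t] with x hx
      exact (Set.indicator_of_mem (by simpa using hx) f).symm
  rw [stmt16_total] at key
  exact key.congr fun x => integral_indicator measurableSet_Ioi

private lemma stmt16_sqrt_atTop : Tendsto Real.sqrt atTop atTop := by
  apply (tendsto_rpow_atTop (by norm_num : (0:ℝ) < 1/2)).congr'
  filter_upwards [eventually_ge_atTop (0:ℝ)] with x hx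
  exact (Real.sqrt_eq_rpow x).symm

/-- Asymptotic separation underlying Lemma 1 (perfect sensing): as `M → ∞`, the normalized
distances of the optimal threshold `γ*(M)` to the two hypothesis means diverge, so the
corresponding Gaussian tail probabilities tend to `0` and `1`. -/
theorem stmt_16 (Q : ℝ → ℝ)
    (hQ : ∀ x, Q x = ∫ t in Set.Ioi x, (Real.sqrt (2 * Real.pi))⁻¹ * Real.exp (-t ^ 2 / 2))
    (c₁ c₂ lam : ℝ) (hc₁ : 0 < c₁) (hc : c₁ < c₂) (hlam : 0 < lam)
    (m₁ m₂ γ : ℝ → ℝ)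
    (hm₁ : ∀ M, m₁ M = c₁ * M + lam) (hm₂ : ∀ M, m₂ M = c₂ * M + lam)
    (hγ : ∀ M, γ M = Real.sqrt (m₁ M * m₂ M *
      (Real.log (m₂ M / m₁ M) / (M * (c₂ - c₁)) + 1))) :
    Tendsto (fun M => (γ M - m₁ M) / Real.sqrt (m₁ M)) atTop atTop ∧
    Tendsto (fun M => (γ M - m₂ M) / Real.sqrt (m₂ M)) atTop atBot ∧
    Tendsto (fun M => Q ((γ M - m₁ M) / Real.sqrt (m₁ M))) atTop (nhds 0) ∧
    Tendsto (fun M => Q ((γ M - m₂ M) / Real.sqrt (m₂ M))) atTop (nhds 1) := by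
  have hd : 0 < c₂ - c₁ := sub_pos.2 hc
  set ε : ℝ → ℝ := fun M => Real.log (m₂ M / m₁ M) / (M * (c₂ - c₁)) with hε
  -- ratios tend to c₁, c₂
  have hm1M : Tendsto (fun M => m₁ M / M) atTop (nhds c₁) := by
    have h1 : Tendsto (fun M : ℝ => c₁ + lam / M) atTop (nhds c₁) := by
      simpa using (tendsto_const_nhds (x := c₁)).add
        ((tendsto_const_nhds (x := lam)).div_atTop tendsto_id)
    apply h1.congr'
    filter_upwards [eventually_gt_atTop (0:ℝ)] with M hM
    rw [hm₁]; field_simp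
  have hm2M : Tendsto (fun M => m₂ M / M) atTop (nhds c₂) := by
    have h1 : Tendsto (fun M : ℝ => c₂ + lam / M) atTop (nhds c₂) := by
      simpa using (tendsto_const_nhds (x := c₂)).add
        ((tendsto_const_nhds (x := lam)).div_atTop tendsto_id)
    apply h1.congr'
    filter_upwards [eventually_gt_atTop (0:ℝ)] with M hM
    rw [hm₂]; field_simp
  -- positivity facts, eventually
  have hpos : ∀ᶠ M in atTop, 0 < m₁ M ∧ 0 < m₂ M ∧ m₁ M < m₂ M ∧ 0 ≤ ε M := by
    filter_upwards [eventually_gt_atTop (0:ℝ)] with M hM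
    have h1 : 0 < m₁ M := by rw [hm₁]; exact add_pos (mul_pos hc₁ hM) hlam
    have h12 : m₁ M < m₂ M := by
      rw [hm₁, hm₂]
      have := mul_lt_mul_of_pos_right hc hM
      linarith
    have h2 : 0 < m₂ M := h1.trans h12
    refine ⟨h1, h2, h12, ?_⟩
    apply div_nonneg
    · exact Real.log_nonneg ((one_le_div h1).2 h12.le)
    · exact (mul_pos hM hd).le
  -- ε → 0
  have hratio : Tendsto (fun M => m₂ M / m₁ M) atTop (nhds (c₂ / c₁)) := by
    have h := hm2M.div hm1M hc₁.ne'
    apply h.congr'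
    filter_upwards [eventually_gt_atTop (0:ℝ)] with M hM
    simp only [Pi.div_apply]
    rw [div_div_div_cancel_right₀ hM.ne']
  have hεlim : Tendsto ε atTop (nhds 0) := by
    have hlog : Tendsto (fun M => Real.log (m₂ M / m₁ M)) atTop
        (nhds (Real.log (c₂ / c₁))) :=
      ((Real.continuousAt_log (div_pos (hc₁.trans hc) hc₁).ne').tendsto).comp hratio
    have hinv : Tendsto (fun M : ℝ => (M * (c₂ - c₁))⁻¹) atTop (nhds 0) :=
      (tendsto_id.atTop_mul_const hd).inv_tendsto_atTop
    have := hlog.mul hinv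
    simpa [hε, div_eq_mul_inv] using this
  -- bracket limits
  have hA : Tendsto (fun M => Real.sqrt (m₂ M / M * (ε M + 1)) - Real.sqrt (m₁ M / M))
      atTop (nhds (Real.sqrt c₂ - Real.sqrt c₁)) := by
    have := ((hm2M.mul (hεlim.add (tendsto_const_nhds (x := (1:ℝ))))).sqrt).sub hm1M.sqrt
    simpa using this
  have hB : Tendsto (fun M => Real.sqrt (m₁ M / M * (ε M + 1)) - Real.sqrt (m₂ M / M))
      atTop (nhds (Real.sqrt c₁ - Real.sqrt c₂)) := by
    have := ((hm1M.mul (hεlim.add (tendsto_const_nhds (x := (1:ℝ))))).sqrt).sub hm2M.sqrt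
    simpa using this
  have hsqlt : Real.sqrt c₁ < Real.sqrt c₂ := Real.sqrt_lt_sqrt hc₁.le hc
  -- eventual identities
  have eq₁ : (fun M => (γ M - m₁ M) / Real.sqrt (m₁ M)) =ᶠ[atTop]
      fun M => Real.sqrt M * (Real.sqrt (m₂ M / M * (ε M + 1)) - Real.sqrt (m₁ M / M)) := by
    filter_upwards [eventually_gt_atTop (0:ℝ), hpos] with M hM hp
    obtain ⟨h1, h2, h12, hε0⟩ := hp
    have hs : Real.sqrt (m₁ M) ≠ 0 := ne_of_gt (Real.sqrt_pos.2 h1)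
    have hγM : γ M = Real.sqrt (m₁ M) * Real.sqrt (m₂ M * (ε M + 1)) := by
      rw [hγ, mul_assoc, Real.sqrt_mul h1.le]
    rw [hγM, sub_div, mul_comm (Real.sqrt (m₁ M)), mul_div_assoc, div_self hs, mul_one,
      Real.div_sqrt, mul_sub, ← Real.sqrt_mul hM.le, ← Real.sqrt_mul hM.le,
      show M * (m₂ M / M * (ε M + 1)) = m₂ M * (ε M + 1) by field_simp,
      show M * (m₁ M / M) = m₁ M by field_simp]
  have eq₂ : (fun M => (γ M - m₂ M) / Real.sqrt (m₂ M)) =ᶠ[atTop]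
      fun M => Real.sqrt M * (Real.sqrt (m₁ M / M * (ε M + 1)) - Real.sqrt (m₂ M / M)) := by
    filter_upwards [eventually_gt_atTop (0:ℝ), hpos] with M hM hp
    obtain ⟨h1, h2, h12, hε0⟩ := hp
    have hs : Real.sqrt (m₂ M) ≠ 0 := ne_of_gt (Real.sqrt_pos.2 h2)
    have hγM : γ M = Real.sqrt (m₂ M) * Real.sqrt (m₁ M * (ε M + 1)) := by
      rw [hγ, show m₁ M * m₂ M * (ε M + 1) = m₂ M * (m₁ M * (ε M + 1)) by ring,
        Real.sqrt_mul h2.le]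
    rw [hγM, sub_div, mul_comm (Real.sqrt (m₂ M)), mul_div_assoc, div_self hs, mul_one,
      Real.div_sqrt, mul_sub, ← Real.sqrt_mul hM.le, ← Real.sqrt_mul hM.le,
      show M * (m₁ M / M * (ε M + 1)) = m₁ M * (ε M + 1) by field_simp,
      show M * (m₂ M / M) = m₂ M by field_simp]
  have t1 : Tendsto (fun M => (γ M - m₁ M) / Real.sqrt (m₁ M)) atTop atTop := by
    refine Filter.Tendsto.congr' eq₁.symm ?_
    exact Filter.Tendsto.atTop_mul_pos (sub_pos.2 hsqlt) stmt16_sqrt_atTop hA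
  have t2 : Tendsto (fun M => (γ M - m₂ M) / Real.sqrt (m₂ M)) atTop atBot := by
    refine Filter.Tendsto.congr' eq₂.symm ?_
    exact Filter.Tendsto.atTop_mul_neg (sub_neg.2 hsqlt) stmt16_sqrt_atTop hB
  refine ⟨t1, t2, ?_, ?_⟩
  · simp only [hQ]
    exact stmt16_Q_atTop.comp t1
  · simp only [hQ]
    exact stmt16_Q_atBot.comp t2
end
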